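/- Let R be a commutative ring with identity and n ≥ 3 an integer. For any indices 1 ≤ i ≠ j ≤ 2n and any a ∈ R, there exists a subgroup U of the elementary symplectic group Ep_{2n}(R) which is nilpotent as a group and such that the symplectic elementary matrix ρ_{ij}(a) lies in the commutator subgroup [U,U]. -/

import Mathlib

open Matrix

namespace Paper

/-! ### Generalities -/

lemma one_add_mul_aux {M : Type*} [Ring M] {x y : M} (h1 : x + y = 0) (h2 : x * y = 0) :
    (1 + x) * (1 + y) = 1 := by
  have h : (1 + x) * (1 + y) = 1 + (x + y) + x * y := by noncomm_ring
  rw [h, h1, h2, add_zero, add_zero]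

/-- The group of self-homeomorphisms of a topological space, under composition. -/
instance homeomorphGroup (X : Type*) [TopologicalSpace X] : Group (X ≃ₜ X) where
  mul a b := b.trans a
  one := Homeomorph.refl X
  inv := Homeomorph.symm
  mul_assoc a b c := rfl
  one_mul a := Homeomorph.ext fun x => rfl
  mul_one a := Homeomorph.ext fun x => rfl
  inv_mul_cancel a := Homeomorph.ext fun x => a.symm_apply_apply x

section Elementary

variable (R : Type*) [Ring R]

lemma stdBasis_cancel (n : ℕ) (i j : Fin n) (a : R) :
    single i j a + single i j (-a) = 0 := by
  rw [← Matrix.single_add, add_neg_cancel, Matrix.single_zero]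

/-- The elementary matrix `e_{ij}(r) = 1 + r·E_{ij}` as an invertible matrix,
i.e. an element of `GL_n(R)`. -/
def elemGL (n : ℕ) (i j : Fin n) (hij : i ≠ j) (r : R) : (Matrix (Fin n) (Fin n) R)ˣ where
  val := 1 + single i j r
  inv := 1 + single i j (-r)
  val_inv := one_add_mul_aux (stdBasis_cancel R n i j r)
    (Matrix.single_mul_single_of_ne (c := r) i j _ (Ne.symm hij) (-r))
  inv_val := one_add_mul_aux
    (by have := stdBasis_cancel R n i j (-r); rwa [neg_neg] at this)
    (Matrix.single_mul_single_of_ne (c := (-r)) i j _ (Ne.symm hij) r)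

/-- The elementary group `E_n(R)`: the subgroup of `GL_n(R)` generated by all
elementary matrices. -/
def ElementaryGroup (n : ℕ) : Subgroup (Matrix (Fin n) (Fin n) R)ˣ :=
  Subgroup.closure { A | ∃ (i j : Fin n) (hij : i ≠ j) (r : R), A = elemGL R n i j hij r }

lemma elemGL_mem (n : ℕ) (i j : Fin n) (hij : i ≠ j) (r : R) :
    elemGL R n i j hij r ∈ ElementaryGroup R n :=
  Subgroup.subset_closure ⟨i, j, hij, r, rfl⟩

/-- The diagonal matrix with `-1` at places `i`, `j` and `1` elsewhere. -/
def negPairDiag (n : ℕ) (i j : Fin n) : Matrix (Fin n) (Fin n) R :=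
  Matrix.diagonal fun k => if k = i ∨ k = j then -1 else 1

lemma negPairDiag_mul_self (n : ℕ) (i j : Fin n) :
    negPairDiag R n i j * negPairDiag R n i j = 1 := by
  rw [negPairDiag, Matrix.diagonal_mul_diagonal]
  have h : (fun k => (if k = i ∨ k = j then (-1 : R) else 1) *
      (if k = i ∨ k = j then (-1 : R) else 1)) = fun _ => (1 : R) := by
    funext k
    by_cases h : k = i ∨ k = j <;> simp [h]
  rw [h, Matrix.diagonal_one]

/-- The matrix `negPairDiag` as an invertible matrix. -/
def negPairGL (n : ℕ) (i j : Fin n) : (Matrix (Fin n) (Fin n) R)ˣ :=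
  ⟨negPairDiag R n i j, negPairDiag R n i j,
    negPairDiag_mul_self R n i j, negPairDiag_mul_self R n i j⟩

/-- The matrix `A_{i,i+1}` (0-indexed: diagonal entries `i` and `i+1` equal `-1`). -/
def APair (n : ℕ) (i : Fin (n - 1)) : (Matrix (Fin n) (Fin n) R)ˣ :=
  negPairGL R n ⟨(i : ℕ), by have := i.isLt; omega⟩ ⟨(i : ℕ) + 1, by have := i.isLt; omega⟩

/-- `E_n(R, 2R)`: the smallest normal subgroup of `E_n(R)` containing all elementary
matrices `e_{ij}(s)` with `s ∈ 2R`. -/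
def RelElementaryGroup (n : ℕ) : Subgroup ↥(ElementaryGroup R n) :=
  Subgroup.normalClosure
    { x : ↥(ElementaryGroup R n) | ∃ (i j : Fin n) (hij : i ≠ j) (r : R),
        x.val = elemGL R n i j hij (2 * r) }

end Elementary

section Symplectic

variable (S : Type*) [CommRing S]

/-- The index involution `σ` on `{0, …, 2n-1}`: `σk = k + n` if `k < n`, else `σk = k - n`. -/
def sigIdx (n : ℕ) (k : Fin (2 * n)) : Fin (2 * n) :=
  if h : (k : ℕ) < n then ⟨(k : ℕ) + n, by omega⟩
  else ⟨(k : ℕ) - n, by have := k.isLt; omega⟩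

lemma sigIdx_ne (n : ℕ) (k : Fin (2 * n)) : sigIdx n k ≠ k := by
  have hk := k.isLt
  unfold sigIdx
  split_ifs with h <;>
    · intro hEq
      have h2 := congrArg Fin.val hEq
      simp only [Fin.val_mk] at h2 -- may need adjusting
      omega

lemma sigIdx_inj (n : ℕ) {k l : Fin (2 * n)} (h : k ≠ l) : sigIdx n k ≠ sigIdx n l := by
  have hk := k.isLt
  have hl := l.isLt
  have hkl : (k : ℕ) ≠ (l : ℕ) := fun hc => h (Fin.ext hc)
  unfold sigIdx
  split_ifs with h1 h2 h2 <;>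
    · intro hEq
      have h3 := congrArg Fin.val hEq
      simp only [Fin.val_mk] at h3
      omega

/-- The symplectic elementary matrix `ρ_{ij}(a)`, as a matrix.  When `j = σi` it is
`1 + a E_{i,σi}`; otherwise it is `1 + a E_{ij} - δ a E_{σj,σi}` where `δ = 1` if `i, j`
are on the same side of `n` and `δ = -1` otherwise. -/
def symElemMat (n : ℕ) (i j : Fin (2 * n)) (a : S) : Matrix (Fin (2 * n)) (Fin (2 * n)) S :=
  if j = sigIdx n i then 1 + single i j a
  else 1 + single i j a -
    single (sigIdx n j) (sigIdx n i)
      ((if ((i : ℕ) < n ↔ (j : ℕ) < n) then 1 else -1) * a)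

lemma symElemMat_mul_neg (n : ℕ) (i j : Fin (2 * n)) (hij : i ≠ j) (a : S) :
    symElemMat S n i j a * symElemMat S n i j (-a) = 1 := by
  unfold symElemMat
  set d : S := if ((i : ℕ) < n ↔ (j : ℕ) < n) then 1 else -1 with hd
  split_ifs with h
  · exact one_add_mul_aux (stdBasis_cancel S _ i j a)
      (Matrix.single_mul_single_of_ne (c := a) i j _ (Ne.symm hij) (-a))
  · rw [add_sub_assoc, add_sub_assoc]
    apply one_add_mul_aux
    · have c1 := stdBasis_cancel S _ i j a
      have c2 := stdBasis_cancel S _ (sigIdx n j) (sigIdx n i) (d * a)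
      rw [mul_neg]
      calc single i j a - single (sigIdx n j) (sigIdx n i) (d * a) +
            (single i j (-a) - single (sigIdx n j) (sigIdx n i) (-(d * a)))
          = (single i j a + single i j (-a)) -
            (single (sigIdx n j) (sigIdx n i) (d * a) +
              single (sigIdx n j) (sigIdx n i) (-(d * a))) := by abel
        _ = 0 := by rw [c1, c2, sub_zero]
    · simp only [sub_mul, mul_sub]
      rw [Matrix.single_mul_single_of_ne (c := a) i j _ (Ne.symm hij) (-a),
        Matrix.single_mul_single_of_ne (c := a) i j _ (Ne.symm (sigIdx_ne n j)) (d * -a),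
        Matrix.single_mul_single_of_ne (c := (d * a)) (sigIdx n j) (sigIdx n i) _ (sigIdx_ne n i) (-a),
        Matrix.single_mul_single_of_ne (c := (d * a)) (sigIdx n j) (sigIdx n i) _
          (sigIdx_inj n hij) (d * -a)]
      simp

/-- The symplectic elementary matrix `ρ_{ij}(a)` as an invertible matrix. -/
def symElemGL (n : ℕ) (i j : Fin (2 * n)) (hij : i ≠ j) (a : S) :
    (Matrix (Fin (2 * n)) (Fin (2 * n)) S)ˣ where
  val := symElemMat S n i j a
  inv := symElemMat S n i j (-a)
  val_inv := symElemMat_mul_neg S n i j hij a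
  inv_val := by have := symElemMat_mul_neg S n i j hij (-a); rwa [neg_neg] at this

/-- The elementary symplectic group `Ep_{2n}(S)`, generated by all symplectic
elementary matrices. -/
def EpGroup (n : ℕ) : Subgroup (Matrix (Fin (2 * n)) (Fin (2 * n)) S)ˣ :=
  Subgroup.closure
    { A | ∃ (i j : Fin (2 * n)) (hij : i ≠ j) (a : S), A = symElemGL S n i j hij a }

/-- The matrix `J = [[0, I_n], [-I_n, 0]]` of the standard symplectic form. -/
def Jmat (n : ℕ) : Matrix (Fin (2 * n)) (Fin (2 * n)) S :=
  Matrix.of fun i j =>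
    if (i : ℕ) + n = (j : ℕ) then 1 else if (j : ℕ) + n = (i : ℕ) then -1 else 0

/-- The symplectic group `Sp_{2n}(S)`: invertible `2n × 2n` matrices `M` with
`Mᵀ * J * M = J`. -/
def SpGroup (n : ℕ) : Subgroup (Matrix (Fin (2 * n)) (Fin (2 * n)) S)ˣ where
  carrier := { M | (↑M : Matrix (Fin (2 * n)) (Fin (2 * n)) S)ᵀ * Jmat S n * ↑M = Jmat S n }
  one_mem' := by simp
  mul_mem' := by
    intro a b ha hb
    show (↑(a * b) : Matrix (Fin (2 * n)) (Fin (2 * n)) S)ᵀ * Jmat S n *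
      (↑(a * b) : Matrix (Fin (2 * n)) (Fin (2 * n)) S) = Jmat S n
    rw [Units.val_mul, Matrix.transpose_mul]
    calc (↑b : Matrix (Fin (2*n)) (Fin (2*n)) S)ᵀ * (↑a : Matrix (Fin (2*n)) (Fin (2*n)) S)ᵀ *
          Jmat S n * (↑a * ↑b)
        = (↑b : Matrix (Fin (2*n)) (Fin (2*n)) S)ᵀ *
            ((↑a : Matrix (Fin (2*n)) (Fin (2*n)) S)ᵀ * Jmat S n * ↑a) * ↑b := by
          noncomm_ring
      _ = (↑b : Matrix (Fin (2*n)) (Fin (2*n)) S)ᵀ * Jmat S n * ↑b := by rw [ha]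
      _ = Jmat S n := hb
  inv_mem' := by
    intro a ha
    have ha' : (↑a : Matrix (Fin (2 * n)) (Fin (2 * n)) S)ᵀ * Jmat S n *
        (↑a : Matrix (Fin (2 * n)) (Fin (2 * n)) S) = Jmat S n := ha
    show ((a⁻¹ : (Matrix (Fin (2 * n)) (Fin (2 * n)) S)ˣ) :
        Matrix (Fin (2 * n)) (Fin (2 * n)) S)ᵀ * Jmat S n *
        ((a⁻¹ : (Matrix (Fin (2 * n)) (Fin (2 * n)) S)ˣ) :
        Matrix (Fin (2 * n)) (Fin (2 * n)) S) = Jmat S n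
    set A : Matrix (Fin (2 * n)) (Fin (2 * n)) S := ↑a with hA
    set B : Matrix (Fin (2 * n)) (Fin (2 * n)) S := ((a⁻¹ :
        (Matrix (Fin (2 * n)) (Fin (2 * n)) S)ˣ) : Matrix (Fin (2 * n)) (Fin (2 * n)) S) with hB
    have h1 : A * B = 1 := a.mul_inv
    calc Bᵀ * Jmat S n * B
        = Bᵀ * (Aᵀ * Jmat S n * A) * B := by rw [ha']
      _ = (A * B)ᵀ * Jmat S n * (A * B) := by rw [Matrix.transpose_mul]; noncomm_ring
      _ = Jmat S n := by rw [h1]; simp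

end Symplectic

section Extra

variable (R : Type*) [Ring R]

/-- Index of the `(2i-1)`-th row (1-indexed), i.e. `2i` 0-indexed. -/
def bIdx0 (k : ℕ) (i : Fin k) : Fin (2 * k) := ⟨2 * (i : ℕ), by have := i.isLt; omega⟩

def bIdx1 (k : ℕ) (i : Fin k) : Fin (2 * k) := ⟨2 * (i : ℕ) + 1, by have := i.isLt; omega⟩

lemma bIdx_ne (k : ℕ) (i : Fin k) : bIdx0 k i ≠ bIdx1 k i := by
  simp only [bIdx0, bIdx1, ne_eq, Fin.mk.injEq]
  omega

/-- The matrix `B_i = e_{2i-1,2i}(1) e_{2i,2i-1}(-1) e_{2i-1,2i}(1) e_{2i,2i-1}(-1)`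
(1-indexed) in `E_{2k}(R)`. -/
def Bmat (k : ℕ) (i : Fin k) : (Matrix (Fin (2 * k)) (Fin (2 * k)) R)ˣ :=
  elemGL R (2 * k) (bIdx0 k i) (bIdx1 k i) (bIdx_ne k i) 1 *
  elemGL R (2 * k) (bIdx1 k i) (bIdx0 k i) (bIdx_ne k i).symm (-1) *
  elemGL R (2 * k) (bIdx0 k i) (bIdx1 k i) (bIdx_ne k i) 1 *
  elemGL R (2 * k) (bIdx1 k i) (bIdx0 k i) (bIdx_ne k i).symm (-1)

end Extra

section SymplecticExtra

variable (S : Type*) [CommRing S]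

def cIdx0 (n : ℕ) (i : Fin n) : Fin (2 * n) := ⟨(i : ℕ), by have := i.isLt; omega⟩

def cIdx1 (n : ℕ) (i : Fin n) : Fin (2 * n) := ⟨n + (i : ℕ), by have := i.isLt; omega⟩

lemma cIdx_ne (n : ℕ) (i : Fin n) : cIdx0 n i ≠ cIdx1 n i := by
  have := i.pos
  simp only [cIdx0, cIdx1, ne_eq, Fin.mk.injEq]
  omega

/-- The matrix `C_i = ρ_{i,n+i}(1) ρ_{n+i,i}(-1) ρ_{i,n+i}(1) ρ_{n+i,i}(-1)` in
`Sp_{2n}(S)`. -/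
def Cmat (n : ℕ) (i : Fin n) : (Matrix (Fin (2 * n)) (Fin (2 * n)) S)ˣ :=
  symElemGL S n (cIdx0 n i) (cIdx1 n i) (cIdx_ne n i) 1 *
  symElemGL S n (cIdx1 n i) (cIdx0 n i) (cIdx_ne n i).symm (-1) *
  symElemGL S n (cIdx0 n i) (cIdx1 n i) (cIdx_ne n i) 1 *
  symElemGL S n (cIdx1 n i) (cIdx0 n i) (cIdx_ne n i).symm (-1)

/-- The equivalence `Fin n ⊕ Fin n ≃ Fin (2 * n)`. -/
def finDouble (n : ℕ) : Fin n ⊕ Fin n ≃ Fin (2 * n) :=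
  finSumFinEquiv.trans (finCongr (two_mul n).symm)

/-- The block-diagonal matrix `diag(A, B)` as a `2n × 2n` matrix. -/
def blockDiag2 (n : ℕ) (A B : Matrix (Fin n) (Fin n) S) :
    Matrix (Fin (2 * n)) (Fin (2 * n)) S :=
  Matrix.reindex (finDouble n) (finDouble n) (Matrix.fromBlocks A 0 0 B)

lemma blockDiag2_mul (n : ℕ) (A B A' B' : Matrix (Fin n) (Fin n) S) :
    blockDiag2 S n A B * blockDiag2 S n A' B' = blockDiag2 S n (A * A') (B * B') := by
  unfold blockDiag2
  rw [Matrix.reindex_apply, Matrix.reindex_apply, Matrix.reindex_apply,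
    Matrix.submatrix_mul_equiv, Matrix.fromBlocks_multiply]
  simp

lemma blockDiag2_one (n : ℕ) : blockDiag2 S n 1 1 = 1 := by
  unfold blockDiag2
  rw [Matrix.reindex_apply, Matrix.fromBlocks_one, Matrix.submatrix_one_equiv]

/-- The hyperbolic embedding `A ↦ diag(A, (Aᵀ)⁻¹) = diag(A, (A⁻¹)ᵀ)` from `GL_n(S)`
to `GL_{2n}(S)`. -/
def hypGL (n : ℕ) (A : (Matrix (Fin n) (Fin n) S)ˣ) :
    (Matrix (Fin (2 * n)) (Fin (2 * n)) S)ˣ where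
  val := blockDiag2 S n ↑A ((↑(A⁻¹) : Matrix (Fin n) (Fin n) S)ᵀ)
  inv := blockDiag2 S n ↑(A⁻¹) ((↑A : Matrix (Fin n) (Fin n) S)ᵀ)
  val_inv := by
    rw [blockDiag2_mul, ← Matrix.transpose_mul, A.mul_inv, Matrix.transpose_one,
      blockDiag2_one]
  inv_val := by
    rw [blockDiag2_mul, ← Matrix.transpose_mul, A.inv_mul, Matrix.transpose_one,
      blockDiag2_one]

end SymplecticExtra


/-! ### Auxiliary material for Statement 3 -/

open scoped commutatorElement

section DeepAux

variable {R : Type*} [Ring R] {m : ℕ}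

/-- `X` has depth `≥ c` with respect to the height function `h`. -/
def IsDeep (h : Fin m → ℕ) (c : ℕ) (X : Matrix (Fin m) (Fin m) R) : Prop :=
  ∀ p q, X p q ≠ 0 → h p + c ≤ h q

variable {h : Fin m → ℕ}

lemma IsDeep.zero (h : Fin m → ℕ) (c : ℕ) :
    IsDeep h c (0 : Matrix (Fin m) (Fin m) R) := by
  intro p q hpq; simp at hpq

lemma IsDeep.add {c : ℕ} {X Y : Matrix (Fin m) (Fin m) R} (hX : IsDeep h c X)
    (hY : IsDeep h c Y) : IsDeep h c (X + Y) := by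
  intro p q hpq
  by_cases h1 : X p q ≠ 0
  · exact hX p q h1
  · push_neg at h1
    apply hY p q
    intro h2
    apply hpq
    simp [Matrix.add_apply, h1, h2]

lemma IsDeep.neg {c : ℕ} {X : Matrix (Fin m) (Fin m) R} (hX : IsDeep h c X) :
    IsDeep h c (-X) := by
  intro p q hpq
  apply hX p q
  simpa using hpq

lemma IsDeep.sub {c : ℕ} {X Y : Matrix (Fin m) (Fin m) R} (hX : IsDeep h c X)
    (hY : IsDeep h c Y) : IsDeep h c (X - Y) := by
  rw [sub_eq_add_neg]; exact hX.add hY.neg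

lemma IsDeep.mono {c c' : ℕ} (hcc : c' ≤ c) {X : Matrix (Fin m) (Fin m) R}
    (hX : IsDeep h c X) : IsDeep h c' X := by
  intro p q hpq
  have := hX p q hpq
  omega

lemma IsDeep.mul {c d : ℕ} {X Y : Matrix (Fin m) (Fin m) R} (hX : IsDeep h c X)
    (hY : IsDeep h d Y) : IsDeep h (c + d) (X * Y) := by
  intro p q hpq
  rw [Matrix.mul_apply] at hpq
  obtain ⟨r, -, hr⟩ := Finset.exists_ne_zero_of_sum_ne_zero hpq
  have h1 : X p r ≠ 0 := fun hc => hr (by simp [hc])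
  have h2 : Y r q ≠ 0 := fun hc => hr (by simp [hc])
  have := hX p r h1
  have := hY r q h2
  omega

lemma IsDeep.pow {X : Matrix (Fin m) (Fin m) R} (hX : IsDeep h 1 X) (k : ℕ) :
    IsDeep h (k + 1) (X ^ (k + 1)) := by
  induction k with
  | zero => simpa using hX
  | succ k ih =>
    have := ih.mul hX
    rwa [← pow_succ] at this

/-- The bound beyond which all depths force the zero matrix. -/
def hBound (h : Fin m → ℕ) : ℕ := (Finset.univ.sup h) + 1

lemma IsDeep.eq_zero {X : Matrix (Fin m) (Fin m) R} (hX : IsDeep h (hBound h) X) :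
    X = 0 := by
  ext p q
  by_contra hc
  have h1 := hX p q hc
  have h2 : h q ≤ Finset.univ.sup h := Finset.le_sup (Finset.mem_univ q)
  unfold hBound at h1
  omega

lemma IsDeep.stdBasis {c : ℕ} {p q : Fin m} (hpq : h p + c ≤ h q) (a : R) :
    IsDeep h c (single p q a) := by
  intro p' q' hne
  by_cases h1 : p = p' ∧ q = q'
  · obtain ⟨rfl, rfl⟩ := h1; exact hpq
  · exact absurd (Matrix.single_apply_of_ne p q a p' q' h1) hne

lemma IsDeep.sum {c : ℕ} {s : Finset ℕ} {f : ℕ → Matrix (Fin m) (Fin m) R}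
    (hf : ∀ k ∈ s, IsDeep h c (f k)) : IsDeep h c (∑ k ∈ s, f k) := by
  classical
  induction s using Finset.induction with
  | empty => simpa using IsDeep.zero h c
  | insert _ _ hk ih =>
    rw [Finset.sum_insert hk]
    exact (hf _ (Finset.mem_insert_self _ _)).add
      (ih fun k hks => hf k (Finset.mem_insert_of_mem hks))

/-- Inverses of deep unipotent units are deep unipotent. -/
lemma inv_deep {c : ℕ} (M : (Matrix (Fin m) (Fin m) R)ˣ)
    (hM : IsDeep h (c + 1) (M.val - 1)) :
    IsDeep h (c + 1) ((M⁻¹).val - 1) := by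
  set X : Matrix (Fin m) (Fin m) R := M.val - 1 with hX
  set y : Matrix (Fin m) (Fin m) R := -X with hy
  have hy1 : IsDeep h 1 y := (hM.mono (by omega)).neg
  set B := hBound h with hB
  have hBpos : 1 ≤ B := by simp [hB, hBound]
  have hpow : ∀ k : ℕ, IsDeep h (c + 1) (y ^ (k + 1)) := by
    intro k
    induction k with
    | zero => simpa using hM.neg
    | succ k ih =>
      rw [pow_succ]
      exact (ih.mul hy1).mono (by omega)
  set Z : Matrix (Fin m) (Fin m) R := ∑ k ∈ Finset.range B, y ^ (k + 1) with hZ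
  have hZdeep : IsDeep h (c + 1) Z := IsDeep.sum fun k _ => hpow k
  have hyB : y ^ (B + 1) = 0 := by
    have h1 : IsDeep h B (y ^ B) := by
      obtain ⟨k, hk⟩ : ∃ k, B = k + 1 := ⟨B - 1, by omega⟩
      rw [hk]
      exact hy1.pow k
    rw [pow_succ, IsDeep.eq_zero h1, zero_mul]
  have hmul : M.val * (1 + Z) = 1 := by
    have hM1 : M.val = 1 - y := by rw [hy, hX]; noncomm_ring
    have hyS : y * Z = ∑ k ∈ Finset.range B, y ^ (k + 2) := by
      rw [hZ, Finset.mul_sum]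
      exact Finset.sum_congr rfl fun k _ => (pow_succ' y (k + 1)).symm
    have htel : ∑ k ∈ Finset.range B, (y ^ (k + 1) - y ^ (k + 2)) =
        y ^ 1 - y ^ (B + 1) := by
      simpa using Finset.sum_range_sub' (fun k => y ^ (k + 1)) B
    calc M.val * (1 + Z) = 1 - y + (Z - y * Z) := by rw [hM1]; noncomm_ring
      _ = 1 - y + (y ^ 1 - y ^ (B + 1)) := by
          rw [hyS, hZ, ← Finset.sum_sub_distrib, htel]
      _ = 1 := by rw [hyB, pow_one]; noncomm_ring
  have hinv : (M⁻¹).val = 1 + Z := by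
    calc (M⁻¹).val = (M⁻¹).val * (M.val * (1 + Z)) := by rw [hmul, mul_one]
      _ = ((M⁻¹).val * M.val) * (1 + Z) := by rw [mul_assoc]
      _ = 1 + Z := by rw [Units.inv_mul, one_mul]
  rw [hinv]
  simpa using hZdeep

/-- The subgroup of units `M` with `M - 1` of depth `≥ c + 1`. -/
def TriSub (h : Fin m → ℕ) (c : ℕ) : Subgroup (Matrix (Fin m) (Fin m) R)ˣ where
  carrier := { M | IsDeep h (c + 1) (M.val - 1) }
  one_mem' := by simpa using IsDeep.zero h (c + 1)
  mul_mem' := by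
    intro a b ha hb
    have key : (a * b).val - 1 = (a.val - 1) * (b.val - 1) + (a.val - 1) + (b.val - 1) := by
      rw [Units.val_mul]; noncomm_ring
    rw [Set.mem_setOf_eq, key]
    exact (((ha.mul hb).mono (by omega)).add ha).add hb
  inv_mem' := by
    intro a ha
    exact inv_deep a ha

lemma mem_triSub {c : ℕ} {M : (Matrix (Fin m) (Fin m) R)ˣ} :
    M ∈ TriSub h c ↔ IsDeep h (c + 1) (M.val - 1) := Iff.rfl

lemma triSub_commutator {c : ℕ} {x g : (Matrix (Fin m) (Fin m) R)ˣ}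
    (hx : x ∈ TriSub h c) (hg : g ∈ TriSub h 0) :
    x * g * x⁻¹ * g⁻¹ ∈ TriSub h (c + 1) := by
  rw [mem_triSub] at hx hg
  set X : Matrix (Fin m) (Fin m) R := x.val - 1 with hX
  set Y : Matrix (Fin m) (Fin m) R := g.val - 1 with hY
  have hx0 : x ∈ TriSub h 0 := (mem_triSub).mpr (hx.mono (by omega))
  have hg0 : g ∈ TriSub h 0 := (mem_triSub).mpr hg
  have hZmem : x⁻¹ * g⁻¹ ∈ TriSub h 0 :=
    (TriSub h 0).mul_mem ((TriSub h 0).inv_mem hx0) ((TriSub h 0).inv_mem hg0)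
  rw [mem_triSub] at hZmem
  set Z : Matrix (Fin m) (Fin m) R := (x⁻¹ * g⁻¹).val - 1 with hZdef
  have e1 : x.val = 1 + X := by rw [hX]; noncomm_ring
  have e2 : g.val = 1 + Y := by rw [hY]; noncomm_ring
  have e3 : (x⁻¹ * g⁻¹).val = 1 + Z := by rw [hZdef]; noncomm_ring
  have e4 : (x * g * x⁻¹ * g⁻¹).val = x.val * g.val * (x⁻¹ * g⁻¹).val := by
    have h0 : x * g * x⁻¹ * g⁻¹ = x * g * (x⁻¹ * g⁻¹) := by rw [mul_assoc]
    rw [h0, Units.val_mul (x * g) (x⁻¹ * g⁻¹), Units.val_mul x g]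
  have e6 : g.val * x.val * (x⁻¹ * g⁻¹).val = 1 := by
    have h1 : g * x * (x⁻¹ * g⁻¹) = 1 := by group
    calc g.val * x.val * (x⁻¹ * g⁻¹).val = (g * x * (x⁻¹ * g⁻¹)).val := by
          rw [Units.val_mul (g * x) (x⁻¹ * g⁻¹), Units.val_mul g x]
      _ = 1 := by rw [h1, Units.val_one]
  have key : (x * g * x⁻¹ * g⁻¹).val - 1 = (X * Y - Y * X) * (1 + Z) := by
    calc (x * g * x⁻¹ * g⁻¹).val - 1
        = x.val * g.val * (x⁻¹ * g⁻¹).val -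
          g.val * x.val * (x⁻¹ * g⁻¹).val := by rw [e4, e6]
      _ = (x.val * g.val - g.val * x.val) * (x⁻¹ * g⁻¹).val := by noncomm_ring
      _ = ((1 + X) * (1 + Y) - (1 + Y) * (1 + X)) * (1 + Z) := by rw [e1, e2, e3]
      _ = (X * Y - Y * X) * (1 + Z) := by noncomm_ring
  show IsDeep h (c + 1 + 1) ((x * g * x⁻¹ * g⁻¹).val - 1)
  rw [key]
  have hcomm : IsDeep h (c + 2) (X * Y - Y * X) :=
    (hx.mul (hg.mono (c' := 1) (by omega))).sub
      (((hg.mono (c' := 1) (by omega)).mul hx).mono (by omega))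
  have expand : (X * Y - Y * X) * (1 + Z) = (X * Y - Y * X) + (X * Y - Y * X) * Z := by
    noncomm_ring
  rw [expand]
  have hc2 : c + 1 + 1 = c + 2 := by omega
  rw [hc2]
  exact hcomm.add ((hcomm.mul (hZmem.mono (c' := 1) (by omega))).mono (by omega))

/-- The group of all deep unipotent units is nilpotent. -/
lemma triSub_nilpotent (h : Fin m → ℕ) :
    Group.IsNilpotent ↥(TriSub h 0 : Subgroup (Matrix (Fin m) (Fin m) R)ˣ) := by
  rw [nilpotent_iff_finite_descending_central_series]
  refine ⟨hBound h, fun c => (TriSub h c).subgroupOf (TriSub h 0), ⟨?_, ?_⟩, ?_⟩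
  · exact Subgroup.subgroupOf_self _
  · rintro ⟨x, hxT⟩ c hx ⟨g, hgT⟩
    rw [Subgroup.mem_subgroupOf] at hx ⊢
    exact triSub_commutator hx hgT
  · rw [eq_bot_iff]
    rintro ⟨x, hxT⟩ hx
    rw [Subgroup.mem_subgroupOf] at hx
    rw [mem_triSub] at hx
    have h1 : x.val - 1 = 0 := IsDeep.eq_zero (hx.mono (by simp [hBound]))
    have h2 : x = 1 := Units.ext (by rw [sub_eq_zero] at h1; simpa using h1)
    simp [Subgroup.mem_bot, h2]

/-- A general commutator formula for unipotent units. -/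
lemma commutator_units_eq {M : Type*} [Ring M] (u v w : Mˣ) {X Y : M}
    (hu : u.val = 1 + X) (hv : v.val = 1 + Y)
    (hw : w.val = 1 + (X * Y - Y * X - X * Y * X))
    (h2 : X * Y * Y = 0) (h5 : X * Y * (Y * X) = 0)
    (h4 : Y * X * Y = 0) (h3 : Y * X * X = 0) (h6 : Y * X * (Y * X) = 0)
    (h7 : X * Y * X * Y = 0) (h8 : X * Y * X * X = 0) (h9 : X * Y * X * (Y * X) = 0) :
    ⁅u, v⁆ = w := by
  have key : u * v = w * (v * u) := by
    apply Units.ext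
    rw [Units.val_mul, Units.val_mul, Units.val_mul, hu, hv, hw]
    have expand : (1 + (X * Y - Y * X - X * Y * X)) * ((1 + Y) * (1 + X)) =
        1 + X + Y + X * Y +
          (X * Y * Y + X * Y * (Y * X) - Y * X * Y - Y * X * X - Y * X * (Y * X)
            - X * Y * X * Y - X * Y * X * X - X * Y * X * (Y * X)) := by
      noncomm_ring
    rw [expand, h2, h5, h4, h3, h6, h7, h8, h9]
    noncomm_ring
  rw [commutatorElement_def, key]
  group

end DeepAux

section SigAux

lemma sigIdx_sigIdx (n : ℕ) (k : Fin (2 * n)) : sigIdx n (sigIdx n k) = k := by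
  have hk := k.isLt
  unfold sigIdx
  split_ifs with h1 h2 h3
  · exact absurd h2 (show ¬((k : ℕ) + n < n) by omega)
  · apply Fin.ext
    show (k : ℕ) + n - n = (k : ℕ)
    omega
  · apply Fin.ext
    show (k : ℕ) - n + n = (k : ℕ)
    omega
  · exact absurd (show ((k : ℕ) - n) < n by omega) h3

lemma sigIdx_lt_iff (n : ℕ) (k : Fin (2 * n)) :
    ((sigIdx n k : Fin (2 * n)) : ℕ) < n ↔ ¬((k : ℕ) < n) := by
  have hk := k.isLt
  unfold sigIdx
  split_ifs with h1
  · show (k : ℕ) + n < n ↔ ¬((k : ℕ) < n)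
    omega
  · show (k : ℕ) - n < n ↔ ¬((k : ℕ) < n)
    omega

lemma eq_sigIdx_comm (n : ℕ) {k l : Fin (2 * n)} : k = sigIdx n l ↔ l = sigIdx n k := by
  constructor <;> (rintro rfl; rw [sigIdx_sigIdx])

lemma ne_sigIdx_comm (n : ℕ) {k l : Fin (2 * n)} (h : k ≠ sigIdx n l) : l ≠ sigIdx n k :=
  fun hc => h ((eq_sigIdx_comm n).mp hc)

end SigAux

section SignAux

variable {S : Type*} [CommRing S]

lemma ite_sign_mul (P Q R : Prop) [Decidable P] [Decidable Q] [Decidable R] :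
    (if (P ↔ Q) then (1 : S) else -1) * (if (Q ↔ R) then (1 : S) else -1) =
      if (P ↔ R) then 1 else -1 := by
  by_cases hP : P <;> by_cases hQ : Q <;> by_cases hR : R <;> simp [hP, hQ, hR]

lemma ite_sign_not (P Q : Prop) [Decidable P] [Decidable Q] :
    (if (P ↔ ¬Q) then (1 : S) else -1) = -(if (P ↔ Q) then (1 : S) else -1) := by
  by_cases hP : P <;> by_cases hQ : Q <;> simp [hP, hQ]

lemma ite_sign_sq (P : Prop) [Decidable P] :
    (if P then (1 : S) else -1) * (if P then (1 : S) else -1) = 1 := by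
  by_cases hP : P <;> simp [hP]

lemma stdBasisMatrix_neg' {m' : Type*} [DecidableEq m'] (p q : m') (a : S) :
    single p q (-a) = -single p q a := by
  ext p' q'
  simp only [Matrix.single, Matrix.neg_apply, Matrix.of_apply]
  split_ifs <;> simp

end SignAux

section SymAux

variable (S : Type*) [CommRing S]

lemma symElemGL_val_of_ne (n : ℕ) (i j : Fin (2 * n)) (hij : i ≠ j)
    (hj : j ≠ sigIdx n i) (a : S) :
    (symElemGL S n i j hij a).val =
      1 + (single i j a - single (sigIdx n j) (sigIdx n i)
        ((if ((i : ℕ) < n ↔ (j : ℕ) < n) then (1 : S) else -1) * a)) := by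
  show symElemMat S n i j a = _
  rw [symElemMat, if_neg hj, add_sub_assoc]

lemma symElemGL_val_sig (n : ℕ) (i : Fin (2 * n)) (hi : i ≠ sigIdx n i) (a : S) :
    (symElemGL S n i (sigIdx n i) hi a).val = 1 + single i (sigIdx n i) a := by
  show symElemMat S n i (sigIdx n i) a = _
  rw [symElemMat, if_pos rfl]

lemma symElemGL_mem_EpGroup (n : ℕ) (i j : Fin (2 * n)) (hij : i ≠ j) (a : S) :
    symElemGL S n i j hij a ∈ EpGroup S n :=
  Subgroup.subset_closure ⟨i, j, hij, a, rfl⟩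

/-- The short-root commutator formula:
`⁅ρ_{ik}(a), ρ_{kj}(1)⁆ = ρ_{ij}(a)` when all six indices are distinct. -/
lemma short_comm (n : ℕ) (i j k : Fin (2 * n)) (hij : i ≠ j) (hik : i ≠ k) (hkj : k ≠ j)
    (hjsi : j ≠ sigIdx n i) (hksi : k ≠ sigIdx n i) (hksj : k ≠ sigIdx n j) (a : S) :
    ⁅symElemGL S n i k hik a, symElemGL S n k j hkj 1⁆ = symElemGL S n i j hij a := by
  set si := sigIdx n i with hsi
  set sj := sigIdx n j with hsj
  set sk := sigIdx n k with hsk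
  have hisj : i ≠ sj := ne_sigIdx_comm n hjsi
  have hisk : i ≠ sk := ne_sigIdx_comm n hksi
  have hjsk : j ≠ sk := ne_sigIdx_comm n hksj
  have hjsj : j ≠ sj := Ne.symm (sigIdx_ne n j)
  have hsisj : si ≠ sj := sigIdx_inj n hij
  have hsisk : si ≠ sk := sigIdx_inj n hik
  have hsksj : sk ≠ sj := sigIdx_inj n hkj
  set d1 : S := if ((i : ℕ) < n ↔ (k : ℕ) < n) then 1 else -1 with hd1
  set d2 : S := if ((k : ℕ) < n ↔ (j : ℕ) < n) then 1 else -1 with hd2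
  set d3 : S := if ((i : ℕ) < n ↔ (j : ℕ) < n) then 1 else -1 with hd3
  have hd : d1 * d2 = d3 := ite_sign_mul _ _ _
  set A1 := single i k a with hA1
  set A2 := single sk si (d1 * a) with hA2
  set B1 := single k j (1 : S) with hB1
  set B2 := single sj sk d2 with hB2
  set X := A1 - A2 with hXdef
  set Y := B1 - B2 with hYdef
  have hu : (symElemGL S n i k hik a).val = 1 + X := symElemGL_val_of_ne S n i k hik hksi a
  have hv : (symElemGL S n k j hkj 1).val = 1 + Y := by
    rw [symElemGL_val_of_ne S n k j hkj hjsk 1, mul_one]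
  have hXY : X * Y = single i j a := by
    rw [hXdef, hYdef, sub_mul, mul_sub, mul_sub, hA1, hA2, hB1, hB2,
      Matrix.single_mul_single_same (c := a) i k j 1,
      Matrix.single_mul_single_of_ne (c := a) i k _ hksj d2,
      Matrix.single_mul_single_of_ne (c := (d1 * a)) sk si _ (Ne.symm hksi) 1,
      Matrix.single_mul_single_of_ne (c := (d1 * a)) sk si _ hsisj d2,
      mul_one]
    abel
  have hYX : Y * X = single sj si (d3 * a) := by
    rw [hYdef, hXdef, sub_mul, mul_sub, mul_sub, hA1, hA2, hB1, hB2,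
      Matrix.single_mul_single_of_ne (c := 1) k j _ (Ne.symm hij) a,
      Matrix.single_mul_single_of_ne (c := 1) k j _ hjsk (d1 * a),
      Matrix.single_mul_single_of_ne (c := d2) sj sk _ (Ne.symm hisk) a,
      Matrix.single_mul_single_same (c := d2) sj sk si (d1 * a)]
    have hco : d2 * (d1 * a) = d3 * a := by
      rw [← mul_assoc, mul_comm d2 d1, hd]
    rw [hco]
    abel
  have hXYX : X * Y * X = 0 := by
    rw [hXY, hXdef, mul_sub, hA1, hA2,
      Matrix.single_mul_single_of_ne (c := a) i j _ (Ne.symm hij) a,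
      Matrix.single_mul_single_of_ne (c := a) i j _ hjsk (d1 * a)]
    abel
  have hw : (symElemGL S n i j hij a).val = 1 + (X * Y - Y * X - X * Y * X) := by
    rw [symElemGL_val_of_ne S n i j hij hjsi a, hXYX, sub_zero, hXY, hYX]
  refine commutator_units_eq _ _ _ hu hv hw ?_ ?_ ?_ ?_ ?_ ?_ ?_ ?_
  · rw [hXY, hYdef, mul_sub, hB1, hB2,
      Matrix.single_mul_single_of_ne (c := a) i j _ (Ne.symm hkj) 1,
      Matrix.single_mul_single_of_ne (c := a) i j _ hjsj d2]
    abel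
  · rw [hXY, hYX, Matrix.single_mul_single_of_ne (c := a) i j _ hjsj (d3 * a)]
  · rw [hYX, hYdef, mul_sub, hB1, hB2,
      Matrix.single_mul_single_of_ne (c := (d3 * a)) sj si _ (Ne.symm hksi) 1,
      Matrix.single_mul_single_of_ne (c := (d3 * a)) sj si _ hsisj d2]
    abel
  · rw [hYX, hXdef, mul_sub, hA1, hA2,
      Matrix.single_mul_single_of_ne (c := (d3 * a)) sj si _ (sigIdx_ne n i) a,
      Matrix.single_mul_single_of_ne (c := (d3 * a)) sj si _ hsisk (d1 * a)]
    abel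
  · rw [hYX, Matrix.single_mul_single_of_ne (c := (d3 * a)) sj si _ hsisj (d3 * a)]
  · rw [hXYX, zero_mul]
  · rw [hXYX, zero_mul]
  · rw [hXYX, zero_mul]

/-- The long-root commutator formula:
`⁅ρ_{ik}(1), ρ_{k,σk}(b)⁆ = ρ_{i,σk}(b) · ρ_{i,σi}(δ·b)`. -/
lemma long_comm (n : ℕ) (i k : Fin (2 * n)) (hik : i ≠ k) (hksi : k ≠ sigIdx n i)
    (hisk : i ≠ sigIdx n k) (hisi : i ≠ sigIdx n i) (b : S) :
    ⁅symElemGL S n i k hik 1, symElemGL S n k (sigIdx n k) (Ne.symm (sigIdx_ne n k)) b⁆ =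
      symElemGL S n i (sigIdx n k) hisk b *
        symElemGL S n i (sigIdx n i) hisi
          ((if ((i : ℕ) < n ↔ (k : ℕ) < n) then (1 : S) else -1) * b) := by
  set si := sigIdx n i with hsi
  set sk := sigIdx n k with hsk
  have hsik : si ≠ k := Ne.symm hksi
  have hski : sk ≠ i := Ne.symm hisk
  have hsisk : si ≠ sk := sigIdx_inj n hik
  have hsii : si ≠ i := sigIdx_ne n i
  have hskk : sk ≠ k := sigIdx_ne n k
  set d : S := if ((i : ℕ) < n ↔ (k : ℕ) < n) then 1 else -1 with hd
  set A1 := single i k (1 : S) with hA1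
  set A2 := single sk si d with hA2
  set X := A1 - A2 with hXdef
  set Y := single k sk b with hYdef
  have hu : (symElemGL S n i k hik 1).val = 1 + X := by
    rw [symElemGL_val_of_ne S n i k hik hksi 1, mul_one]
  have hv : (symElemGL S n k sk (Ne.symm (sigIdx_ne n k)) b).val = 1 + Y :=
    symElemGL_val_sig S n k (Ne.symm (sigIdx_ne n k)) b
  have hXY : X * Y = single i sk b := by
    rw [hXdef, sub_mul, hA1, hA2, hYdef,
      Matrix.single_mul_single_same (c := 1) i k sk b,
      Matrix.single_mul_single_of_ne (c := d) sk si _ hsik b, one_mul]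
    abel
  have hYX : Y * X = -single k si (d * b) := by
    rw [hYdef, hXdef, mul_sub, hA1, hA2,
      Matrix.single_mul_single_of_ne (c := b) k sk _ hski 1,
      Matrix.single_mul_single_same (c := b) k sk si d]
    rw [mul_comm b d]
    abel
  have hXYX : X * Y * X = -single i si (d * b) := by
    rw [hXY, hXdef, mul_sub, hA1, hA2,
      Matrix.single_mul_single_of_ne (c := b) i sk _ hski 1,
      Matrix.single_mul_single_same (c := b) i sk si d]
    rw [mul_comm b d]
    abel
  have hw : (symElemGL S n i sk hisk b *
      symElemGL S n i si hisi (d * b)).val = 1 + (X * Y - Y * X - X * Y * X) := by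
    rw [Units.val_mul, symElemGL_val_sig S n i hisi (d * b),
      symElemGL_val_of_ne S n i sk hisk (Ne.symm hsisk) b]
    have hrw : sigIdx n sk = k := by rw [hsk, sigIdx_sigIdx]
    rw [hrw]
    have hsign : (if ((i : ℕ) < n ↔ ((sk : Fin (2 * n)) : ℕ) < n) then (1 : S) else -1)
        = -d := by
      have hq : (((sk : Fin (2 * n)) : ℕ) < n) ↔ ¬((k : ℕ) < n) := by
        rw [hsk]; exact sigIdx_lt_iff n k
      rw [if_congr (iff_congr Iff.rfl hq) rfl rfl, ite_sign_not, hd]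
    rw [hsign, neg_mul, stdBasisMatrix_neg', sub_neg_eq_add]
    rw [hXYX, hXY, hYX, sub_neg_eq_add, sub_neg_eq_add]
    have hzero : (single i sk b + single k si (d * b)) *
        single i si (d * b) = 0 := by
      rw [add_mul,
        Matrix.single_mul_single_of_ne (c := b) i sk _ hski (d * b),
        Matrix.single_mul_single_of_ne (c := (d * b)) k si _ hsii (d * b)]
      abel
    calc (1 + (single i sk b + single k si (d * b))) *
        (1 + single i si (d * b))
        = 1 + (single i sk b + single k si (d * b)) +
          single i si (d * b) +
          (single i sk b + single k si (d * b)) *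
            single i si (d * b) := by noncomm_ring
      _ = 1 + (single i sk b + single k si (d * b) +
          single i si (d * b)) := by rw [hzero]; abel
  refine commutator_units_eq _ _ _ hu hv hw ?_ ?_ ?_ ?_ ?_ ?_ ?_ ?_
  · rw [hXY, hYdef, Matrix.single_mul_single_of_ne (c := b) i sk _ hskk b]
  · rw [hXY, hYX, mul_neg, Matrix.single_mul_single_of_ne (c := b) i sk _ hskk (d * b),
      neg_zero]
  · rw [hYX, hYdef, neg_mul, Matrix.single_mul_single_of_ne (c := (d * b)) k si _ hsik b, neg_zero]
  · rw [hYX, hXdef, neg_mul, mul_sub, hA1, hA2,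
      Matrix.single_mul_single_of_ne (c := (d * b)) k si _ hsii 1,
      Matrix.single_mul_single_of_ne (c := (d * b)) k si _ hsisk d, sub_zero, neg_zero]
  · rw [hYX, neg_mul, mul_neg, Matrix.single_mul_single_of_ne (c := (d * b)) k si _ hsik (d * b),
      neg_zero, neg_zero]
  · rw [hXYX, hYdef, neg_mul, Matrix.single_mul_single_of_ne (c := (d * b)) i si _ hsik b, neg_zero]
  · rw [hXYX, hXdef, neg_mul, mul_sub, hA1, hA2,
      Matrix.single_mul_single_of_ne (c := (d * b)) i si _ hsii 1,
      Matrix.single_mul_single_of_ne (c := (d * b)) i si _ hsisk d, sub_zero, neg_zero]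
  · rw [hXYX, hYX, neg_mul, mul_neg, Matrix.single_mul_single_of_ne (c := (d * b)) i si _ hsik (d * b),
      neg_zero, neg_zero]

/-- Membership of a short-root elementary matrix in a triangular subgroup. -/
lemma symElemGL_mem_triSub_of_ne (n : ℕ) (h : Fin (2 * n) → ℕ) (i j : Fin (2 * n))
    (hij : i ≠ j) (hj : j ≠ sigIdx n i) (a : S)
    (h1 : h i < h j) (h2 : h (sigIdx n j) < h (sigIdx n i)) :
    symElemGL S n i j hij a ∈ TriSub h 0 := by
  rw [mem_triSub, symElemGL_val_of_ne S n i j hij hj a, add_sub_cancel_left]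
  exact (IsDeep.stdBasis (by omega) _).sub (IsDeep.stdBasis (by omega) _)

/-- Membership of a long-root elementary matrix in a triangular subgroup. -/
lemma symElemGL_mem_triSub_sig (n : ℕ) (h : Fin (2 * n) → ℕ) (i : Fin (2 * n))
    (hi : i ≠ sigIdx n i) (a : S) (h1 : h i < h (sigIdx n i)) :
    symElemGL S n i (sigIdx n i) hi a ∈ TriSub h 0 := by
  rw [mem_triSub, symElemGL_val_sig S n i hi a, add_sub_cancel_left]
  exact IsDeep.stdBasis (by omega) _

end SymAux

section ChoiceAux

lemma card_quad_le {m : ℕ} (a b c d : Fin m) :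
    ({a, b, c, d} : Finset (Fin m)).card ≤ 4 := by
  have h1 := Finset.card_insert_le a ({b, c, d} : Finset (Fin m))
  have h2 := Finset.card_insert_le b ({c, d} : Finset (Fin m))
  have h3 := Finset.card_insert_le c ({d} : Finset (Fin m))
  have h4 : ({d} : Finset (Fin m)).card = 1 := Finset.card_singleton d
  omega

lemma exists_not_mem_of_card_lt {m : ℕ} (s : Finset (Fin m)) (hs : s.card < m) :
    ∃ k, k ∉ s := by
  by_contra hcon
  push_neg at hcon
  have h1 : (Finset.univ : Finset (Fin m)).card ≤ s.card :=
    Finset.card_le_card fun x _ => hcon x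
  rw [Finset.card_univ, Fintype.card_fin] at h1
  omega

end ChoiceAux

/-- For a commutative ring `S`, `n ≥ 3` and any `i ≠ j` in `Fin (2n)`,
`a ∈ S`, there is a nilpotent subgroup `U` of `Ep_{2n}(S)` with `ρ_{ij}(a) ∈ [U, U]`. -/
theorem statement3 (S : Type*) [CommRing S] (n : ℕ) (hn : 3 ≤ n) (i j : Fin (2 * n))
    (hij : i ≠ j) (a : S) :
    ∃ U : Subgroup (Matrix (Fin (2 * n)) (Fin (2 * n)) S)ˣ, U ≤ EpGroup S n ∧
      Group.IsNilpotent ↥U ∧ symElemGL S n i j hij a ∈ ⁅U, U⁆ := by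
  classical
  by_cases hcase : j = sigIdx n i
  · -- the long-root case `j = σi`
    subst hcase
    obtain ⟨k, hk⟩ := exists_not_mem_of_card_lt
      ({i, sigIdx n i, i, sigIdx n i} : Finset (Fin (2 * n)))
      (lt_of_le_of_lt (card_quad_le _ _ _ _) (by omega))
    simp only [Finset.mem_insert, Finset.mem_singleton] at hk
    push_neg at hk
    obtain ⟨hk1, hk2, -, -⟩ := hk
    obtain ⟨l, hl⟩ := exists_not_mem_of_card_lt
      ({i, sigIdx n i, k, sigIdx n k} : Finset (Fin (2 * n)))
      (lt_of_le_of_lt (card_quad_le _ _ _ _) (by omega))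
    simp only [Finset.mem_insert, Finset.mem_singleton] at hl
    push_neg at hl
    obtain ⟨hl1, hl2, hl3, hl4⟩ := hl
    have hik : i ≠ k := Ne.symm hk1
    have hisk : i ≠ sigIdx n k := ne_sigIdx_comm n hk2
    have hil : i ≠ l := Ne.symm hl1
    have hsli : sigIdx n l ≠ i := Ne.symm (ne_sigIdx_comm n hl2)
    have hslk : sigIdx n l ≠ k := Ne.symm (ne_sigIdx_comm n hl4)
    have hsll : sigIdx n l ≠ l := sigIdx_ne n l
    have hski : sigIdx n k ≠ i := Ne.symm hisk
    have hskk : sigIdx n k ≠ k := sigIdx_ne n k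
    have hskl : sigIdx n k ≠ l := Ne.symm hl4
    have hsksl : sigIdx n k ≠ sigIdx n l := sigIdx_inj n (Ne.symm hl3)
    have hsii : sigIdx n i ≠ i := sigIdx_ne n i
    have hsik : sigIdx n i ≠ k := Ne.symm hk2
    have hsil : sigIdx n i ≠ l := Ne.symm hl2
    have hsisl : sigIdx n i ≠ sigIdx n l := sigIdx_inj n (Ne.symm hl1)
    have hsisk : sigIdx n i ≠ sigIdx n k := sigIdx_inj n hik
    set h' : Fin (2 * n) → ℕ := fun p =>
      if p = i then 0 else if p = k then 1 else if p = l then 2 else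
      if p = sigIdx n l then 3 else if p = sigIdx n k then 4 else
      if p = sigIdx n i then 5 else 0 with hh'
    have ei : h' i = 0 := by simp [hh']
    have ek : h' k = 1 := by simp [hh', hk1]
    have el : h' l = 2 := by simp [hh', hl1, hl3]
    have esl : h' (sigIdx n l) = 3 := by simp [hh', hsli, hslk, hsll]
    have esk : h' (sigIdx n k) = 4 := by simp [hh', hski, hskk, hskl, hsksl]
    have esi : h' (sigIdx n i) = 5 := by simp [hh', hsii, hsik, hsil, hsisl, hsisk]
    set U : Subgroup (Matrix (Fin (2 * n)) (Fin (2 * n)) S)ˣ :=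
      TriSub h' 0 ⊓ EpGroup S n with hU
    set d : S := if ((i : ℕ) < n ↔ (k : ℕ) < n) then 1 else -1 with hd
    set b : S := d * a with hbdef
    have hg1 : symElemGL S n i k hik 1 ∈ U :=
      ⟨symElemGL_mem_triSub_of_ne S n h' i k hik hk2 1 (by rw [ei, ek]; omega)
        (by rw [esk, esi]; omega), symElemGL_mem_EpGroup S n i k hik 1⟩
    have hg2 : symElemGL S n k (sigIdx n k) (Ne.symm (sigIdx_ne n k)) b ∈ U :=
      ⟨symElemGL_mem_triSub_sig S n h' k (Ne.symm (sigIdx_ne n k)) b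
        (by rw [ek, esk]; omega),
        symElemGL_mem_EpGroup S n k (sigIdx n k) (Ne.symm (sigIdx_ne n k)) b⟩
    have hg3 : symElemGL S n i l hil b ∈ U :=
      ⟨symElemGL_mem_triSub_of_ne S n h' i l hil hl2 b (by rw [ei, el]; omega)
        (by rw [esl, esi]; omega), symElemGL_mem_EpGroup S n i l hil b⟩
    have hg4 : symElemGL S n l (sigIdx n k) hl4 1 ∈ U :=
      ⟨symElemGL_mem_triSub_of_ne S n h' l (sigIdx n k) hl4
        hsksl 1 (by rw [el, esk]; omega)
        (by rw [sigIdx_sigIdx n k, ek, esl]; omega),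
        symElemGL_mem_EpGroup S n l (sigIdx n k) hl4 1⟩
    have hc1 := long_comm S n i k hik hk2 hisk hij b
    have hc2 := short_comm S n i (sigIdx n k) l hisk hil hl4
      (sigIdx_inj n hk1) hl2 (by rw [sigIdx_sigIdx]; exact hl3) b
    have hdd : d * b = a := by rw [hbdef, ← mul_assoc, hd, ite_sign_sq, one_mul]
    have key : symElemGL S n i (sigIdx n i) hij a =
        (⁅symElemGL S n i l hil b, symElemGL S n l (sigIdx n k) hl4 1⁆)⁻¹ *
        ⁅symElemGL S n i k hik 1,
          symElemGL S n k (sigIdx n k) (Ne.symm (sigIdx_ne n k)) b⁆ := by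
      rw [hc1, hc2, hdd]
      group
    refine ⟨U, inf_le_right, ?_, ?_⟩
    · haveI := triSub_nilpotent (R := S) h'
      exact nilpotent_of_mulEquiv (Subgroup.subgroupOfEquivOfLe
        (inf_le_left : U ≤ TriSub h' 0))
    · rw [key]
      exact mul_mem (inv_mem (Subgroup.commutator_mem_commutator hg3 hg4))
        (Subgroup.commutator_mem_commutator hg1 hg2)
  · -- the short-root case `j ≠ σi`
    obtain ⟨k, hk⟩ := exists_not_mem_of_card_lt
      ({i, j, sigIdx n i, sigIdx n j} : Finset (Fin (2 * n)))
      (lt_of_le_of_lt (card_quad_le _ _ _ _) (by omega))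
    simp only [Finset.mem_insert, Finset.mem_singleton] at hk
    push_neg at hk
    obtain ⟨hk1, hk2, hk3, hk4⟩ := hk
    have hji : j ≠ i := Ne.symm hij
    have hjk : j ≠ k := Ne.symm hk2
    have hsji : sigIdx n j ≠ i := Ne.symm (ne_sigIdx_comm n hcase)
    have hsjk : sigIdx n j ≠ k := Ne.symm hk4
    have hsjj : sigIdx n j ≠ j := sigIdx_ne n j
    have hisk : i ≠ sigIdx n k := ne_sigIdx_comm n hk3
    have hjsk : j ≠ sigIdx n k := ne_sigIdx_comm n hk4
    have hski : sigIdx n k ≠ i := Ne.symm hisk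
    have hskk : sigIdx n k ≠ k := sigIdx_ne n k
    have hskj : sigIdx n k ≠ j := Ne.symm hjsk
    have hsksj : sigIdx n k ≠ sigIdx n j := sigIdx_inj n hk2
    have hsii : sigIdx n i ≠ i := sigIdx_ne n i
    have hsik : sigIdx n i ≠ k := Ne.symm hk3
    have hsij : sigIdx n i ≠ j := Ne.symm hcase
    have hsisj : sigIdx n i ≠ sigIdx n j := sigIdx_inj n hij
    have hsisk : sigIdx n i ≠ sigIdx n k := sigIdx_inj n (Ne.symm hk1)
    set h' : Fin (2 * n) → ℕ := fun p =>
      if p = i then 0 else if p = k then 1 else if p = j then 2 else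
      if p = sigIdx n j then 3 else if p = sigIdx n k then 4 else
      if p = sigIdx n i then 5 else 0 with hh'
    have ei : h' i = 0 := by simp [hh']
    have ek : h' k = 1 := by simp [hh', hk1]
    have ej : h' j = 2 := by simp [hh', hji, hjk]
    have esj : h' (sigIdx n j) = 3 := by simp [hh', hsji, hsjk, hsjj]
    have esk : h' (sigIdx n k) = 4 := by simp [hh', hski, hskk, hskj, hsksj]
    have esi : h' (sigIdx n i) = 5 := by simp [hh', hsii, hsik, hsij, hsisj, hsisk]
    set U : Subgroup (Matrix (Fin (2 * n)) (Fin (2 * n)) S)ˣ :=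
      TriSub h' 0 ⊓ EpGroup S n with hU
    have hik : i ≠ k := Ne.symm hk1
    have hx : symElemGL S n i k hik a ∈ U :=
      ⟨symElemGL_mem_triSub_of_ne S n h' i k hik hk3 a (by rw [ei, ek]; omega)
        (by rw [esk, esi]; omega), symElemGL_mem_EpGroup S n i k hik a⟩
    have hy : symElemGL S n k j hk2 1 ∈ U :=
      ⟨symElemGL_mem_triSub_of_ne S n h' k j hk2 hjsk 1 (by rw [ek, ej]; omega)
        (by rw [esj, esk]; omega), symElemGL_mem_EpGroup S n k j hk2 1⟩
    refine ⟨U, inf_le_right, ?_, ?_⟩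
    · haveI := triSub_nilpotent (R := S) h'
      exact nilpotent_of_mulEquiv (Subgroup.subgroupOfEquivOfLe
        (inf_le_left : U ≤ TriSub h' 0))
    · rw [← short_comm S n i j k hij hik hk2 hcase hk3 hk4 a]
      exact Subgroup.commutator_mem_commutator hx hy

end Paper
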